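/- The extreme Kerr throat data achieve equality in the mass functional bound: with σ₀ = ln(4|J|) - ln(1+cos²θ) and ω₀ = -8J cos θ/(1+cos²θ), the functional M(σ,ω) = (1/2π) ∫_{S²} ((σ')² + 4σ + (ω')²/η²) dS₀ (with η = e^σ sin²θ and dS₀ the round area element sin θ dθ dφ) satisfies M(σ₀, ω₀) = 8 ln(2|J|) + 8, i.e. 2|J| = e^{(M(σ₀,ω₀)-8)/8}. -/

import Mathlib

open Real Set

/-- the extreme Kerr throat data achieve equality in the mass
functional bound: `M(σ₀, ω₀) = 8 ln(2|J|) + 8`, i.e.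
`2|J| = e^{(M(σ₀,ω₀)-8)/8}`. -/
theorem stmt_13 (J : ℝ) (hJ : J ≠ 0)
    (σ₀ ω₀ η : ℝ → ℝ)
    (hσ₀ : σ₀ = fun θ => Real.log (4 * |J|) - Real.log (1 + Real.cos θ ^ 2))
    (hω₀ : ω₀ = fun θ => -(8 * J * Real.cos θ) / (1 + Real.cos θ ^ 2))
    (hη : η = fun θ => Real.exp (σ₀ θ) * Real.sin θ ^ 2)
    (M : ℝ)
    (hM : M = ∫ θ in (0)..π,
      ((deriv σ₀ θ) ^ 2 + 4 * σ₀ θ + (deriv ω₀ θ) ^ 2 / (η θ) ^ 2) *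
        Real.sin θ) :
    M = 8 * Real.log (2 * |J|) + 8 ∧ 2 * |J| = Real.exp ((M - 8) / 8) := by
  have hJ' : (0:ℝ) < |J| := abs_pos.mpr hJ
  set L := Real.log (4 * |J|) with hL
  have hd : ∀ θ : ℝ, (0:ℝ) < 1 + Real.cos θ ^ 2 := fun θ => by positivity
  have hden : ∀ θ : ℝ, HasDerivAt (fun t => 1 + Real.cos t ^ 2)
      (-(2 * Real.cos θ * Real.sin θ)) θ := by
    intro θ
    have h := ((Real.hasDerivAt_cos θ).pow 2).const_add 1
    refine h.congr_deriv (Eq.symm ?_)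
    ring
  have hσ' : ∀ θ, deriv σ₀ θ = 2 * Real.cos θ * Real.sin θ / (1 + Real.cos θ ^ 2) := by
    intro θ
    have hne := ne_of_gt (hd θ)
    have h := ((hden θ).log hne).const_sub L
    have h2 : HasDerivAt σ₀ (2 * Real.cos θ * Real.sin θ / (1 + Real.cos θ ^ 2)) θ := by
      rw [hσ₀]
      refine h.congr_deriv (Eq.symm ?_)
      field_simp
    exact h2.deriv
  have hω' : ∀ θ, deriv ω₀ θ = 8 * J * Real.sin θ ^ 3 / (1 + Real.cos θ ^ 2) ^ 2 := by
    intro θ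
    have hne := ne_of_gt (hd θ)
    have hnum : HasDerivAt (fun t => -(8 * J * Real.cos t)) (8 * J * Real.sin θ) θ := by
      have h := ((Real.hasDerivAt_cos θ).const_mul (8 * J)).neg
      refine h.congr_deriv (Eq.symm ?_); ring
    have h := hnum.div (hden θ) hne
    have h2 : HasDerivAt ω₀ (8 * J * Real.sin θ ^ 3 / (1 + Real.cos θ ^ 2) ^ 2) θ := by
      rw [hω₀]
      refine h.congr_deriv (Eq.symm ?_)
      have hs2 : Real.sin θ ^ 2 = 1 - Real.cos θ ^ 2 := by
        nlinarith [Real.sin_sq_add_cos_sq θ]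
      field_simp
      linear_combination (Real.sin θ) * hs2
    exact h2.deriv
  have hηval : ∀ θ, η θ = 4 * |J| / (1 + Real.cos θ ^ 2) * Real.sin θ ^ 2 := by
    intro θ
    rw [hη, hσ₀]
    simp only
    rw [Real.exp_sub, Real.exp_log (by positivity : (0:ℝ) < 4 * |J|),
      Real.exp_log (hd θ)]
  set g : ℝ → ℝ := fun θ =>
    (4 * Real.sin θ ^ 2 / (1 + Real.cos θ ^ 2) + 4 * L
      - 4 * Real.log (1 + Real.cos θ ^ 2)) * Real.sin θ with hg
  have key : ∀ θ, ((deriv σ₀ θ) ^ 2 + 4 * σ₀ θ + (deriv ω₀ θ) ^ 2 / (η θ) ^ 2) *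
      Real.sin θ = g θ := by
    intro θ
    by_cases hs : Real.sin θ = 0
    · simp [hg, hs]
    · have hne := ne_of_gt (hd θ)
      have hJne : |J| ≠ 0 := ne_of_gt hJ'
      have hJ2 : |J| ^ 2 = J ^ 2 := sq_abs J
      have hterm : (deriv ω₀ θ) ^ 2 / (η θ) ^ 2
          = 4 * Real.sin θ ^ 2 / (1 + Real.cos θ ^ 2) ^ 2 := by
        rw [hω' θ, hηval θ]
        field_simp
        linear_combination (-64) * hJ2
      rw [hσ' θ, hterm, hσ₀, hg]
      simp only
      field_simp
      ring
  set F : ℝ → ℝ := fun θ =>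
    -4 * Real.cos θ * (1 + L - Real.log (1 + Real.cos θ ^ 2)) with hF
  have hF' : ∀ θ, HasDerivAt F (g θ) θ := by
    intro θ
    have hne := ne_of_gt (hd θ)
    have h1 : HasDerivAt (fun t => -4 * Real.cos t) (-4 * -Real.sin θ) θ :=
      (Real.hasDerivAt_cos θ).const_mul (-4)
    have h2 : HasDerivAt (fun t => 1 + L - Real.log (1 + Real.cos t ^ 2))
        (-(-(2 * Real.cos θ * Real.sin θ) / (1 + Real.cos θ ^ 2))) θ :=
      ((hden θ).log hne).const_sub (1 + L)
    have h := h1.mul h2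
    refine h.congr_deriv (Eq.symm ?_)
    have hc2 : Real.sin θ ^ 2 = 1 - Real.cos θ ^ 2 := by
      nlinarith [Real.sin_sq_add_cos_sq θ]
    rw [hg]
    simp only
    field_simp
    linear_combination (Real.sin θ) * hc2
  have hgc : Continuous g := by
    rw [hg]
    apply Continuous.mul _ Real.continuous_sin
    apply Continuous.sub
    · apply Continuous.add
      · exact (continuous_const.mul (Real.continuous_sin.pow 2)).div
          (continuous_const.add (Real.continuous_cos.pow 2))
          (fun x => ne_of_gt (hd x))
      · exact continuous_const
    · exact continuous_const.mul
        ((continuous_const.add (Real.continuous_cos.pow 2)).log (fun x => ne_of_gt (hd x)))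
  have hMval : M = 8 + 8 * L - 8 * Real.log 2 := by
    rw [hM]
    rw [intervalIntegral.integral_congr (fun θ _ => key θ)]
    rw [intervalIntegral.integral_eq_sub_of_hasDerivAt (fun θ _ => hF' θ)
      (hgc.intervalIntegrable 0 π)]
    rw [hF]
    simp only [Real.cos_pi, Real.cos_zero]
    norm_num
    ring
  have hlog : L = Real.log 2 + Real.log (2 * |J|) := by
    rw [hL]
    rw [show (4:ℝ) * |J| = 2 * (2 * |J|) by ring]
    rw [Real.log_mul two_ne_zero (by positivity)]
  have hM1 : M = 8 * Real.log (2 * |J|) + 8 := by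
    rw [hMval, hlog]; ring
  refine ⟨hM1, ?_⟩
  rw [hM1]
  rw [show (8 * Real.log (2 * |J|) + 8 - 8) / 8 = Real.log (2 * |J|) by ring]
  rw [Real.exp_log (by positivity)]
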